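/- Let π₁ and π₂ be Poisson tensors on ℝ^N satisfying, for all x, y ∈ ℝ^N and all indices i, j, k: (i) ∑_{s=1}^N ( π_{2,sk}(x) (∂π_{1,ij}/∂x_s)(x) + π_{1,si}(x) (∂π_{2,jk}/∂x_s)(x) + π_{1,sj}(x) (∂π_{2,ki}/∂x_s)(x) ) = 0; and (ii) ∑_{s,m=1}^N y_s π_{1,mk}(x) (∂²π_{2,ij}/∂x_m ∂x_s)(x) = 0. Then the 2N×2N matrix field on ℝ^{2N} with blocks Π^{xx}(x,y) = π₁(x), Π^{xy}(x,y) = π₂(x), Π^{yx}(x,y) = π₂(x), Π^{yy}(x,y) = ∑_{s=1}^N (∂π₂/∂x_s)(x) y_s is a Poisson tensor on ℝ^{2N} (denoted π₁ ⋉₂ π₂). -/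

import Mathlib

open scoped ContDiff

/-- Partial derivative `∂f/∂z_s` at `z`, for functions on `ℝ^ι`. -/
noncomputable def pd {ι : Type} [Fintype ι] [DecidableEq ι]
    (s : ι) (f : (ι → ℝ) → ℝ) (x : ι → ℝ) : ℝ :=
  fderiv ℝ f x (Pi.single s 1)

/-- A Poisson tensor on `ℝ^ι`: a smooth antisymmetric matrix field satisfying the
Jacobi condition. -/
def IsPoissonTensor {ι : Type} [Fintype ι] [DecidableEq ι]
    (π : (ι → ℝ) → Matrix ι ι ℝ) : Prop :=
  (∀ i j, ContDiff ℝ ∞ fun x => π x i j) ∧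
  (∀ x i j, π x j i = - π x i j) ∧
  (∀ x i j k, ∑ s, (pd s (fun y => π y i j) x * π x s k
      + pd s (fun y => π y k i) x * π x s j
      + pd s (fun y => π y j k) x * π x s i) = 0)

/-- `c` is a (smooth) Casimir function for `π`. -/
def IsCasimir {ι : Type} [Fintype ι] [DecidableEq ι]
    (π : (ι → ℝ) → Matrix ι ι ℝ) (c : (ι → ℝ) → ℝ) : Prop :=
  ContDiff ℝ ∞ c ∧ ∀ x j, ∑ s, pd s c x * π x s j = 0

/-- The matrix of partial derivatives `(∂π_{ij}/∂x_s)(x)`. -/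
noncomputable def pdMat {N : ℕ} (s : Fin N)
    (π : (Fin N → ℝ) → Matrix (Fin N) (Fin N) ℝ) (x : Fin N → ℝ) :
    Matrix (Fin N) (Fin N) ℝ :=
  Matrix.of fun i j => pd s (fun y => π y i j) x

/-- The `x`-part of a point `z = (x,y) ∈ ℝ^{2N}`. -/
def Xc {N : ℕ} (z : (Fin N ⊕ Fin N) → ℝ) : Fin N → ℝ := fun i => z (Sum.inl i)

/-- The `y`-part of a point `z = (x,y) ∈ ℝ^{2N}`. -/
def Yc {N : ℕ} (z : (Fin N ⊕ Fin N) → ℝ) : Fin N → ℝ := fun i => z (Sum.inr i)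


section stmt16Aux

lemma pd_congr' {ι : Type} [Fintype ι] [DecidableEq ι] {f g : (ι → ℝ) → ℝ}
    (h : ∀ x, f x = g x) (s : ι) (x : ι → ℝ) : pd s f x = pd s g x := by
  rw [funext h]

lemma pd_neg' {ι : Type} [Fintype ι] [DecidableEq ι] (f : (ι → ℝ) → ℝ) (s : ι) (x : ι → ℝ) :
    pd s (fun y => -f y) x = -pd s f x := by
  simp [pd, fderiv_neg]

lemma pd_const' {ι : Type} [Fintype ι] [DecidableEq ι] (c : ℝ) (s : ι) (x : ι → ℝ) :
    pd s (fun _ => c) x = 0 := by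
  simp [pd]

lemma pd_smooth {ι : Type} [Fintype ι] [DecidableEq ι] {f : (ι → ℝ) → ℝ}
    (hf : ContDiff ℝ ∞ f) (s : ι) : ContDiff ℝ ∞ (fun x => pd s f x) :=
  (hf.fderiv_right (m := ∞) (by simp)).clm_apply contDiff_const

lemma pd_sum' {ι : Type} [Fintype ι] [DecidableEq ι] {κ : Type*} (t : Finset κ)
    (f : κ → (ι → ℝ) → ℝ) {x : ι → ℝ}
    (hf : ∀ c ∈ t, DifferentiableAt ℝ (f c) x) (s : ι) :
    pd s (fun x => ∑ c ∈ t, f c x) x = ∑ c ∈ t, pd s (f c) x := by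
  simp [pd, fderiv_fun_sum hf]

lemma pd_add' {ι : Type} [Fintype ι] [DecidableEq ι] {f g : (ι → ℝ) → ℝ} {x : ι → ℝ}
    (hf : DifferentiableAt ℝ f x) (hg : DifferentiableAt ℝ g x) (s : ι) :
    pd s (fun x => f x + g x) x = pd s f x + pd s g x := by
  simp [pd, fderiv_fun_add hf hg]

lemma pd_mul' {ι : Type} [Fintype ι] [DecidableEq ι] {f g : (ι → ℝ) → ℝ} {x : ι → ℝ}
    (hf : DifferentiableAt ℝ f x) (hg : DifferentiableAt ℝ g x) (s : ι) :
    pd s (fun x => f x * g x) x = pd s f x * g x + f x * pd s g x := by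
  simp [pd, fderiv_fun_mul hf hg]; ring

lemma pd_comm {ι : Type} [Fintype ι] [DecidableEq ι] {f : (ι → ℝ) → ℝ}
    (hf : ContDiff ℝ ∞ f) (s m : ι) (x : ι → ℝ) :
    pd s (fun x' => pd m f x') x = pd m (fun x' => pd s f x') x := by
  have hsym : IsSymmSndFDerivAt ℝ f x :=
    hf.contDiffAt.isSymmSndFDerivAt (by simp [minSmoothness_of_isRCLikeNormedField]; exact WithTop.coe_le_coe.mpr le_top)
  have key : ∀ (u v : ι), pd u (fun x' => pd v f x') x
      = fderiv ℝ (fderiv ℝ f) x (Pi.single u 1) (Pi.single v 1) := by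
    intro u v
    unfold pd
    rw [fderiv_clm_apply
      ((hf.fderiv_right (m := ∞) (by simp)).differentiable (by decide)).differentiableAt
      (differentiableAt_const _)]
    simp
  rw [key, key, hsym]

noncomputable def LX (N : ℕ) : ((Fin N ⊕ Fin N) → ℝ) →L[ℝ] (Fin N → ℝ) :=
  ContinuousLinearMap.pi fun i => ContinuousLinearMap.proj (Sum.inl i)

variable {N : ℕ}

lemma LX_single_inl (s : Fin N) : LX N (Pi.single (Sum.inl s) 1) = Pi.single s 1 := by
  funext i; simp [LX, ContinuousLinearMap.proj_apply, Pi.single_apply]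

lemma LX_single_inr (s : Fin N) : LX N (Pi.single (Sum.inr s) (1:ℝ)) = 0 := by
  funext i; simp [LX, ContinuousLinearMap.proj_apply, Pi.single_apply]

lemma contDiff_comp_Xc {f : (Fin N → ℝ) → ℝ} (hf : ContDiff ℝ ∞ f) :
    ContDiff ℝ ∞ (fun z : (Fin N ⊕ Fin N) → ℝ => f (Xc z)) :=
  hf.comp (LX N).contDiff

lemma diffAt_comp_Xc {f : (Fin N → ℝ) → ℝ} (hf : ContDiff ℝ ∞ f)
    (z : (Fin N ⊕ Fin N) → ℝ) :
    DifferentiableAt ℝ (fun z : (Fin N ⊕ Fin N) → ℝ => f (Xc z)) z :=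
  ((contDiff_comp_Xc hf).differentiable (by decide)).differentiableAt

lemma fderiv_comp_Xc {f : (Fin N → ℝ) → ℝ} {z : (Fin N ⊕ Fin N) → ℝ}
    (hf : DifferentiableAt ℝ f (Xc z)) :
    fderiv ℝ (fun z => f (Xc z)) z = (fderiv ℝ f (Xc z)).comp (LX N) := by
  have h : (fun z : (Fin N ⊕ Fin N) → ℝ => f (Xc z)) = f ∘ (LX N) := rfl
  have hf' : DifferentiableAt ℝ f ((LX N) z) := hf
  rw [h, fderiv_comp z hf' ((LX N).differentiableAt), (LX N).fderiv]
  rfl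

lemma pd_inl_comp {f : (Fin N → ℝ) → ℝ} {z : (Fin N ⊕ Fin N) → ℝ}
    (hf : DifferentiableAt ℝ f (Xc z)) (s : Fin N) :
    pd (Sum.inl s) (fun z => f (Xc z)) z = pd s f (Xc z) := by
  unfold pd
  rw [fderiv_comp_Xc hf, ContinuousLinearMap.comp_apply, LX_single_inl]

lemma pd_inr_comp {f : (Fin N → ℝ) → ℝ} {z : (Fin N ⊕ Fin N) → ℝ}
    (hf : DifferentiableAt ℝ f (Xc z)) (s : Fin N) :
    pd (Sum.inr s) (fun z => f (Xc z)) z = 0 := by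
  unfold pd
  rw [fderiv_comp_Xc hf, ContinuousLinearMap.comp_apply, LX_single_inr, map_zero]

lemma pd_coord (T S : Fin N ⊕ Fin N) (z : (Fin N ⊕ Fin N) → ℝ) :
    pd S (fun z => z T) z = (Pi.single S (1:ℝ) : (Fin N ⊕ Fin N) → ℝ) T := by
  have h : fderiv ℝ (fun z : (Fin N ⊕ Fin N) → ℝ => z T) z
      = ContinuousLinearMap.proj T :=
    (ContinuousLinearMap.proj T : ((Fin N ⊕ Fin N) → ℝ) →L[ℝ] ℝ).fderiv
  simp [pd, h]

lemma diffAt_Yc (m : Fin N) (z : (Fin N ⊕ Fin N) → ℝ) :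
    DifferentiableAt ℝ (fun z : (Fin N ⊕ Fin N) → ℝ => Yc z m) z :=
  (ContinuousLinearMap.proj (Sum.inr m) : ((Fin N ⊕ Fin N) → ℝ) →L[ℝ] ℝ).differentiableAt

lemma contDiff_D (g : Fin N → (Fin N → ℝ) → ℝ) (hg : ∀ m, ContDiff ℝ ∞ (g m)) :
    ContDiff ℝ ∞ (fun z : (Fin N ⊕ Fin N) → ℝ => ∑ m, Yc z m * g m (Xc z)) := by
  refine ContDiff.sum fun m _ => ContDiff.mul ?_ (contDiff_comp_Xc (hg m))
  exact (ContinuousLinearMap.proj (Sum.inr m) : ((Fin N ⊕ Fin N) → ℝ) →L[ℝ] ℝ).contDiff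

lemma pd_Yc (s : Fin N ⊕ Fin N) (m : Fin N) (z : (Fin N ⊕ Fin N) → ℝ) :
    pd s (fun z => Yc z m) z = if s = Sum.inr m then 1 else 0 := by
  rw [show (fun z : (Fin N ⊕ Fin N) → ℝ => Yc z m) = fun z => z (Sum.inr m) from rfl,
    pd_coord]
  simp [Pi.single_apply, eq_comm]

lemma pd_D_inr (g : Fin N → (Fin N → ℝ) → ℝ) (hg : ∀ m, ContDiff ℝ ∞ (g m))
    (s : Fin N) (z : (Fin N ⊕ Fin N) → ℝ) :
    pd (Sum.inr s) (fun z => ∑ m, Yc z m * g m (Xc z)) z = g s (Xc z) := by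
  rw [pd_sum' Finset.univ (fun m z => Yc z m * g m (Xc z)) (fun m _ => (diffAt_Yc m z).mul (diffAt_comp_Xc (hg m) z)) _]
  have h : ∀ m : Fin N, pd (Sum.inr s) (fun z => Yc z m * g m (Xc z)) z
      = (if s = m then 1 else 0) * g m (Xc z) := by
    intro m
    rw [pd_mul' (diffAt_Yc m z) (diffAt_comp_Xc (hg m) z),
      pd_inr_comp (((hg m).differentiable (by decide)).differentiableAt), pd_Yc]
    simp [Sum.inr.injEq]
  simp only [h]
  simp [ite_mul, Finset.sum_ite_eq]

lemma pd_D_inl (g : Fin N → (Fin N → ℝ) → ℝ) (hg : ∀ m, ContDiff ℝ ∞ (g m))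
    (s : Fin N) (z : (Fin N ⊕ Fin N) → ℝ) :
    pd (Sum.inl s) (fun z => ∑ m, Yc z m * g m (Xc z)) z
      = ∑ m, Yc z m * pd s (g m) (Xc z) := by
  rw [pd_sum' Finset.univ (fun m z => Yc z m * g m (Xc z)) (fun m _ => (diffAt_Yc m z).mul (diffAt_comp_Xc (hg m) z)) _]
  refine Finset.sum_congr rfl fun m _ => ?_
  rw [pd_mul' (diffAt_Yc m z) (diffAt_comp_Xc (hg m) z),
    pd_inl_comp (((hg m).differentiable (by decide)).differentiableAt), pd_Yc]
  simp

end stmt16Aux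

/-- under conditions (i)–(ii), the tensor
`π₁ ⋉₂ π₂ = [[π₁(x), π₂(x)],[π₂(x), ∑_s (∂π₂/∂x_s)(x) y_s]]` is Poisson on `ℝ^{2N}`. -/
theorem stmt16 {N : ℕ} (hN : 1 ≤ N)
    (π₁ π₂ : (Fin N → ℝ) → Matrix (Fin N) (Fin N) ℝ)
    (hπ₁ : IsPoissonTensor π₁) (hπ₂ : IsPoissonTensor π₂)
    (hi : ∀ (x : Fin N → ℝ) (i j k : Fin N),
      ∑ s, (π₂ x s k * pd s (fun x' => π₁ x' i j) x
        + π₁ x s i * pd s (fun x' => π₂ x' j k) x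
        + π₁ x s j * pd s (fun x' => π₂ x' k i) x) = 0)
    (hii : ∀ (x y : Fin N → ℝ) (i j k : Fin N),
      ∑ s, ∑ m, y s * π₁ x m k
        * pd m (fun x' => pd s (fun x'' => π₂ x'' i j) x') x = 0) :
    IsPoissonTensor (fun z : (Fin N ⊕ Fin N) → ℝ =>
      Matrix.fromBlocks
        (π₁ (Xc z))
        (π₂ (Xc z))
        (π₂ (Xc z))
        (∑ s, Yc z s • pdMat s π₂ (Xc z))) := by
  obtain ⟨hs₁, ha₁, hj₁⟩ := hπ₁
  obtain ⟨hs₂, ha₂, hj₂⟩ := hπ₂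
  have d1 : ∀ (i j : Fin N) (x : Fin N → ℝ),
      DifferentiableAt ℝ (fun y => π₁ y i j) x :=
    fun i j x => ((hs₁ i j).differentiable (by decide)).differentiableAt
  have d2 : ∀ (i j : Fin N) (x : Fin N → ℝ),
      DifferentiableAt ℝ (fun y => π₂ y i j) x :=
    fun i j x => ((hs₂ i j).differentiable (by decide)).differentiableAt
  have dd2 : ∀ (i j s : Fin N) (x : Fin N → ℝ),
      DifferentiableAt ℝ (fun x' => pd s (fun y => π₂ y i j) x') x :=
    fun i j s x => ((pd_smooth (hs₂ i j) s).differentiable (by decide)).differentiableAt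
  refine ⟨?_, ?_, ?_⟩
  · -- smoothness
    rintro (i | i) (j | j) <;>
      simp only [Matrix.fromBlocks_apply₁₁, Matrix.fromBlocks_apply₁₂,
        Matrix.fromBlocks_apply₂₁, Matrix.fromBlocks_apply₂₂,
        Matrix.sum_apply, Matrix.smul_apply, pdMat, Matrix.of_apply, smul_eq_mul]
    · exact contDiff_comp_Xc (hs₁ i j)
    · exact contDiff_comp_Xc (hs₂ i j)
    · exact contDiff_comp_Xc (hs₂ i j)
    · exact contDiff_D _ fun m => pd_smooth (hs₂ i j) m
  · -- antisymmetry
    rintro z (i | i) (j | j) <;>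
      simp only [Matrix.fromBlocks_apply₁₁, Matrix.fromBlocks_apply₁₂,
        Matrix.fromBlocks_apply₂₁, Matrix.fromBlocks_apply₂₂,
        Matrix.sum_apply, Matrix.smul_apply, pdMat, Matrix.of_apply, smul_eq_mul]
    · exact ha₁ (Xc z) i j
    · exact ha₂ (Xc z) i j
    · exact ha₂ (Xc z) i j
    · have h : ∀ s : Fin N, pd s (fun y => π₂ y j i) (Xc z)
          = -pd s (fun y => π₂ y i j) (Xc z) := by
        intro s
        rw [pd_congr' (fun y => ha₂ y i j) s (Xc z), pd_neg']
      simp only [h, mul_neg, Finset.sum_neg_distrib]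
  · -- Jacobi
    intro z a b c
    have E1l : ∀ (i j : Fin N) (s : Fin N) (z : (Fin N ⊕ Fin N) → ℝ),
        pd (Sum.inl s) (fun z' => π₁ (Xc z') i j) z = pd s (fun y => π₁ y i j) (Xc z) :=
      fun i j s z => pd_inl_comp (d1 i j _) s
    have E1r : ∀ (i j : Fin N) (s : Fin N) (z : (Fin N ⊕ Fin N) → ℝ),
        pd (Sum.inr s) (fun z' => π₁ (Xc z') i j) z = 0 :=
      fun i j s z => pd_inr_comp (d1 i j _) s
    have E2l : ∀ (i j : Fin N) (s : Fin N) (z : (Fin N ⊕ Fin N) → ℝ),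
        pd (Sum.inl s) (fun z' => π₂ (Xc z') i j) z = pd s (fun y => π₂ y i j) (Xc z) :=
      fun i j s z => pd_inl_comp (d2 i j _) s
    have E2r : ∀ (i j : Fin N) (s : Fin N) (z : (Fin N ⊕ Fin N) → ℝ),
        pd (Sum.inr s) (fun z' => π₂ (Xc z') i j) z = 0 :=
      fun i j s z => pd_inr_comp (d2 i j _) s
    have E5 : ∀ (i j : Fin N) (s : Fin N) (z : (Fin N ⊕ Fin N) → ℝ),
        pd (Sum.inl s) (fun z' => ∑ m, Yc z' m * pd m (fun y => π₂ y i j) (Xc z')) z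
          = ∑ m, Yc z m * pd s (fun x' => pd m (fun y => π₂ y i j) x') (Xc z) :=
      fun i j s z => pd_D_inl _ (fun m => pd_smooth (hs₂ i j) m) s z
    have E6 : ∀ (i j : Fin N) (s : Fin N) (z : (Fin N ⊕ Fin N) → ℝ),
        pd (Sum.inr s) (fun z' => ∑ m, Yc z' m * pd m (fun y => π₂ y i j) (Xc z')) z
          = pd s (fun y => π₂ y i j) (Xc z) :=
      fun i j s z => pd_D_inr _ (fun m => pd_smooth (hs₂ i j) m) s z
    have hii' : ∀ (i j k : Fin N),
        ∑ s, ∑ m, Yc z m * pd s (fun x' => pd m (fun y => π₂ y i j) x') (Xc z)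
          * π₁ (Xc z) s k = 0 := by
      intro i j k
      have h := hii (Xc z) (Yc z) i j k
      rw [Finset.sum_comm] at h
      refine Eq.trans (Finset.sum_congr rfl fun s _ => Finset.sum_congr rfl fun m _ => ?_) h
      ring
    have hswap : ∀ (i j s m : Fin N),
        pd s (fun x' => pd m (fun y => π₂ y i j) x') (Xc z)
          = pd m (fun x' => pd s (fun y => π₂ y i j) x') (Xc z) :=
      fun i j s m => pd_comm (hs₂ i j) s m (Xc z)
    have hderiv : ∀ (i j k m : Fin N),
        ∑ s, (pd s (fun x' => pd m (fun y => π₂ y i j) x') (Xc z) * π₂ (Xc z) s k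
          + pd s (fun y => π₂ y i j) (Xc z) * pd m (fun y => π₂ y s k) (Xc z)
          + pd s (fun x' => pd m (fun y => π₂ y k i) x') (Xc z) * π₂ (Xc z) s j
          + pd s (fun y => π₂ y k i) (Xc z) * pd m (fun y => π₂ y s j) (Xc z)
          + pd s (fun x' => pd m (fun y => π₂ y j k) x') (Xc z) * π₂ (Xc z) s i
          + pd s (fun y => π₂ y j k) (Xc z) * pd m (fun y => π₂ y s i) (Xc z)) = 0 := by
      intro i j k m
      have hdiff : ∀ s ∈ (Finset.univ : Finset (Fin N)),
          DifferentiableAt ℝ (fun x => pd s (fun y => π₂ y i j) x * π₂ x s k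
            + pd s (fun y => π₂ y k i) x * π₂ x s j
            + pd s (fun y => π₂ y j k) x * π₂ x s i) (Xc z) :=
        fun s _ => (((dd2 i j s _).mul (d2 s k _)).add ((dd2 k i s _).mul (d2 s j _))).add
          ((dd2 j k s _).mul (d2 s i _))
      have h1 : ∑ s, pd m (fun x => pd s (fun y => π₂ y i j) x * π₂ x s k
            + pd s (fun y => π₂ y k i) x * π₂ x s j
            + pd s (fun y => π₂ y j k) x * π₂ x s i) (Xc z) = 0 := by
        calc ∑ s, pd m (fun x => pd s (fun y => π₂ y i j) x * π₂ x s k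
              + pd s (fun y => π₂ y k i) x * π₂ x s j
              + pd s (fun y => π₂ y j k) x * π₂ x s i) (Xc z)
            = pd m (fun x => ∑ s, (pd s (fun y => π₂ y i j) x * π₂ x s k
              + pd s (fun y => π₂ y k i) x * π₂ x s j
              + pd s (fun y => π₂ y j k) x * π₂ x s i)) (Xc z) :=
              (pd_sum' Finset.univ _ hdiff m).symm
          _ = pd m (fun _ => (0:ℝ)) (Xc z) := pd_congr' (fun x => hj₂ x i j k) m (Xc z)
          _ = 0 := pd_const' 0 m (Xc z)
      refine Eq.trans (Finset.sum_congr rfl fun s _ => ?_) h1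
      rw [hswap i j s m, hswap k i s m, hswap j k s m,
        pd_add' (f := fun x => pd s (fun y => π₂ y i j) x * π₂ x s k
            + pd s (fun y => π₂ y k i) x * π₂ x s j)
          (g := fun x => pd s (fun y => π₂ y j k) x * π₂ x s i)
          (((dd2 i j s _).mul (d2 s k _)).add ((dd2 k i s _).mul (d2 s j _)))
          ((dd2 j k s _).mul (d2 s i _)) m,
        pd_add' (f := fun x => pd s (fun y => π₂ y i j) x * π₂ x s k)
          (g := fun x => pd s (fun y => π₂ y k i) x * π₂ x s j)
          ((dd2 i j s _).mul (d2 s k _)) ((dd2 k i s _).mul (d2 s j _)) m,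
        pd_mul' (dd2 i j s _) (d2 s k _) m, pd_mul' (dd2 k i s _) (d2 s j _) m,
        pd_mul' (dd2 j k s _) (d2 s i _) m]
      ring
    rcases a with i | i <;> rcases b with j | j <;> rcases c with k | k <;>
      rw [Fintype.sum_sum_type] <;>
      simp only [Matrix.fromBlocks_apply₁₁, Matrix.fromBlocks_apply₁₂,
        Matrix.fromBlocks_apply₂₁, Matrix.fromBlocks_apply₂₂,
        Matrix.sum_apply, Matrix.smul_apply, pdMat, Matrix.of_apply, smul_eq_mul] <;>
      simp only [E1l, E1r, E2l, E2r, E5, E6, zero_mul, mul_zero, add_zero, zero_add,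
        Finset.sum_const_zero]
    · -- lll
      exact hj₁ (Xc z) i j k
    · -- llr
      refine Eq.trans (Finset.sum_congr rfl fun s _ => ?_) (hi (Xc z) i j k)
      ring
    · -- lrl
      refine Eq.trans (Finset.sum_congr rfl fun s _ => ?_) (hi (Xc z) k i j)
      ring
    · -- lrr
      have key2 : (∑ s, (pd s (fun y => π₂ y i j) (Xc z) * π₂ (Xc z) s k
            + pd s (fun y => π₂ y k i) (Xc z) * π₂ (Xc z) s j
            + pd s (fun y => π₂ y j k) (Xc z) * π₂ (Xc z) s i))
          + ∑ s, ∑ m, Yc z m * pd s (fun x' => pd m (fun y => π₂ y j k) x') (Xc z)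
            * π₁ (Xc z) s i = 0 := by
        rw [hj₂ (Xc z) i j k, hii' j k i, add_zero]
      refine Eq.trans ?_ key2
      rw [← Finset.sum_add_distrib, ← Finset.sum_add_distrib]
      refine Finset.sum_congr rfl fun s _ => ?_
      rw [Finset.sum_mul]
      ring
    · -- rll
      refine Eq.trans (Finset.sum_congr rfl fun s _ => ?_) (hi (Xc z) j k i)
      ring
    · -- rlr
      have key2 : (∑ s, (pd s (fun y => π₂ y i j) (Xc z) * π₂ (Xc z) s k
            + pd s (fun y => π₂ y k i) (Xc z) * π₂ (Xc z) s j
            + pd s (fun y => π₂ y j k) (Xc z) * π₂ (Xc z) s i))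
          + ∑ s, ∑ m, Yc z m * pd s (fun x' => pd m (fun y => π₂ y k i) x') (Xc z)
            * π₁ (Xc z) s j = 0 := by
        rw [hj₂ (Xc z) i j k, hii' k i j, add_zero]
      refine Eq.trans ?_ key2
      rw [← Finset.sum_add_distrib, ← Finset.sum_add_distrib]
      refine Finset.sum_congr rfl fun s _ => ?_
      rw [Finset.sum_mul]
      ring
    · -- rrl
      have key2 : (∑ s, (pd s (fun y => π₂ y i j) (Xc z) * π₂ (Xc z) s k
            + pd s (fun y => π₂ y k i) (Xc z) * π₂ (Xc z) s j
            + pd s (fun y => π₂ y j k) (Xc z) * π₂ (Xc z) s i))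
          + ∑ s, ∑ m, Yc z m * pd s (fun x' => pd m (fun y => π₂ y i j) x') (Xc z)
            * π₁ (Xc z) s k = 0 := by
        rw [hj₂ (Xc z) i j k, hii' i j k, add_zero]
      refine Eq.trans ?_ key2
      rw [← Finset.sum_add_distrib, ← Finset.sum_add_distrib]
      refine Finset.sum_congr rfl fun s _ => ?_
      rw [Finset.sum_mul]
      ring
    · -- rrr
      have key2 : (∑ s, ∑ m, Yc z m
            * (pd s (fun x' => pd m (fun y => π₂ y i j) x') (Xc z) * π₂ (Xc z) s k
            + pd s (fun y => π₂ y i j) (Xc z) * pd m (fun y => π₂ y s k) (Xc z)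
            + pd s (fun x' => pd m (fun y => π₂ y k i) x') (Xc z) * π₂ (Xc z) s j
            + pd s (fun y => π₂ y k i) (Xc z) * pd m (fun y => π₂ y s j) (Xc z)
            + pd s (fun x' => pd m (fun y => π₂ y j k) x') (Xc z) * π₂ (Xc z) s i
            + pd s (fun y => π₂ y j k) (Xc z) * pd m (fun y => π₂ y s i) (Xc z))) = 0 := by
        rw [Finset.sum_comm]
        refine Finset.sum_eq_zero fun m _ => ?_
        rw [← Finset.mul_sum, hderiv i j k m, mul_zero]
      refine Eq.trans ?_ key2
      rw [← Finset.sum_add_distrib]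
      refine Finset.sum_congr rfl fun s _ => ?_
      simp only [Finset.sum_mul, Finset.mul_sum]
      rw [← Finset.sum_add_distrib, ← Finset.sum_add_distrib,
        ← Finset.sum_add_distrib, ← Finset.sum_add_distrib, ← Finset.sum_add_distrib]
      refine Finset.sum_congr rfl fun m _ => ?_
      ring
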